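/- Under the saw map setup, assume 1/α_{k*} + 1/β_{k*} ≥ 1. Then for every x ∈ J* with x ∉ Σ there exists n ∈ ℕ such that T^i(x) ∈ J_{k*} for all i ≥ n. -/

import Mathlib

/-- `T` is affine (linear) on the segment `[a, b]`. -/
def AffOn (T : ℝ → ℝ) (a b : ℝ) : Prop :=
  ∃ m c : ℝ, ∀ x ∈ Set.Icc a b, T x = m * x + c

/-- The "saw map" setup: sequences `q, r, p`, the map `T`, fixed points `e k ∈ (q (k+1), r k)`
and `ehat k ∈ (r k, q k)`, and the index `kstar`, subject to all standing assumptions. -/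
structure SawMapSetup where
  q : ℕ → ℝ
  r : ℕ → ℝ
  p : ℕ → ℝ
  T : ℝ → ℝ
  e : ℕ → ℝ
  ehat : ℕ → ℝ
  kstar : ℕ
  hq_pos : ∀ k, 1 ≤ k → 0 < q k
  hr_pos : ∀ k, 0 < r k
  hq1r0 : q 1 < r 0
  hrq : ∀ k, 1 ≤ k → r k < q k
  hqr : ∀ k, 1 ≤ k → q (k + 1) < r k
  hq_lim : Filter.Tendsto q Filter.atTop (nhds 0)
  hr_lim : Filter.Tendsto r Filter.atTop (nhds 0)
  hp_pos : ∀ k, 0 < p k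
  hp_dec : ∀ k, p (k + 1) < p k
  hp0r0 : p 0 < r 0
  hpr : ∀ k, 1 ≤ k → r k < p k
  hT0 : T 0 = 0
  hTq : ∀ k, 1 ≤ k → T (q k) = 0
  hTr : ∀ k, T (r k) = p k
  haff0 : AffOn T (q 1) (r 0)
  haff1 : ∀ k, 1 ≤ k → AffOn T (q (k + 1)) (r k)
  haff2 : ∀ k, 1 ≤ k → AffOn T (r k) (q k)
  hTJ : Set.MapsTo T (Set.Icc 0 (r 0)) (Set.Icc 0 (r 0))
  halpha1 : ∀ k, 1 ≤ k → 1 < p k / (r k - q (k + 1))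
  he_mem : ∀ k, 1 ≤ k → e k ∈ Set.Ioo (q (k + 1)) (r k)
  he_fix : ∀ k, 1 ≤ k → T (e k) = e k
  he_uniq : ∀ k, 1 ≤ k → ∀ x ∈ Set.Ioo (q (k + 1)) (r k), T x = x → x = e k
  hehat_mem : ∀ k, 1 ≤ k → ehat k ∈ Set.Ioo (r k) (q k)
  hehat_fix : ∀ k, 1 ≤ k → T (ehat k) = ehat k
  hehat_uniq : ∀ k, 1 ≤ k → ∀ x ∈ Set.Ioo (r k) (q k), T x = x → x = ehat k
  halpha_mono : ∀ k, p k / (r k - q (k + 1)) < p (k + 1) / (r (k + 1) - q (k + 2))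
  hbeta_mono : ∀ k, 1 ≤ k → p k / (q k - r k) < p (k + 1) / (q (k + 1) - r (k + 1))
  hkstar : 1 ≤ kstar
  hp_e_big : ∀ k, kstar + 1 ≤ k → e (k - 1) < p k
  hp_e_small : 2 ≤ kstar → ∀ k, 2 ≤ k → k ≤ kstar → p k < e (k - 1)
  htech : ∀ k, 1 ≤ k → k < kstar → p k < q k + e k / (p (k - 1) / (r (k - 1) - q k))

namespace SawMapSetup

variable (S : SawMapSetup)

/-- Absolute value of the slope of `T` on `[q (k+1), r k]`. -/
noncomputable def alpha (k : ℕ) : ℝ := S.p k / (S.r k - S.q (k + 1))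

/-- Absolute value of the slope of `T` on `[r k, q k]`. -/
noncomputable def beta (k : ℕ) : ℝ := S.p k / (S.q k - S.r k)

/-- The invariant segment `J* = [0, p kstar]`. -/
def Jstar : Set ℝ := Set.Icc 0 (S.p S.kstar)

/-- The segment `J_k = [e k, p k]`. -/
def Jk (k : ℕ) : Set ℝ := Set.Icc (S.e k) (S.p k)

/-- The segment `G_k = [T (p k), p k]`. -/
def Gk (k : ℕ) : Set ℝ := Set.Icc (S.T (S.p k)) (S.p k)

/-- The set `Ω` of points of `J*` that are eventually mapped to `0`. -/
def Omega : Set ℝ := {x | x ∈ S.Jstar ∧ ∃ n, 1 ≤ n ∧ S.T^[n] x = 0}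

/-- The set `Σ`, the closure of `Ω`. -/
def Sig : Set ℝ := closure S.Omega

end SawMapSetup

namespace SawMapSetup

variable (S : SawMapSetup)

/-! ### Basic consequences of the axioms -/

lemma rq_pos (j : ℕ) (hj : 1 ≤ j) : 0 < S.r j - S.q (j + 1) :=
  sub_pos.2 (S.hqr j hj)

lemma qr_pos (j : ℕ) (hj : 1 ≤ j) : 0 < S.q j - S.r j :=
  sub_pos.2 (S.hrq j hj)

lemma alpha_pos (j : ℕ) (hj : 1 ≤ j) : 0 < S.alpha j :=
  div_pos (S.hp_pos j) (S.rq_pos j hj)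

lemma beta_pos (j : ℕ) (hj : 1 ≤ j) : 0 < S.beta j :=
  div_pos (S.hp_pos j) (S.qr_pos j hj)

lemma alpha_mul (j : ℕ) (hj : 1 ≤ j) :
    S.alpha j * (S.r j - S.q (j + 1)) = S.p j :=
  div_mul_cancel₀ _ (ne_of_gt (S.rq_pos j hj))

lemma beta_mul (j : ℕ) (hj : 1 ≤ j) :
    S.beta j * (S.q j - S.r j) = S.p j :=
  div_mul_cancel₀ _ (ne_of_gt (S.qr_pos j hj))

lemma alpha_strictMono : StrictMono S.alpha :=
  strictMono_nat_of_lt_succ S.halpha_mono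

lemma alpha_gt_one (j : ℕ) (hj : 1 ≤ j) : 1 < S.alpha j := S.halpha1 j hj

lemma p_strictAnti : StrictAnti S.p :=
  strictAnti_nat_of_succ_lt S.hp_dec

lemma beta_le (i j : ℕ) (hi : 1 ≤ i) (hij : i ≤ j) : S.beta i ≤ S.beta j := by
  induction j, hij using Nat.le_induction with
  | base => exact le_refl _
  | succ n hn ih => exact ih.trans (le_of_lt (S.hbeta_mono n (hi.trans hn)))

lemma q_anti (i j : ℕ) (hi : 1 ≤ i) (hij : i ≤ j) : S.q j ≤ S.q i := by
  induction j, hij using Nat.le_induction with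
  | base => exact le_refl _
  | succ n hn ih =>
      exact le_trans (le_of_lt (lt_trans (S.hqr n (hi.trans hn)) (S.hrq n (hi.trans hn)))) ih

/-- Explicit formula for `T` on the increasing branch of tent `j`. -/
lemma Tinc (j : ℕ) (hj : 1 ≤ j) :
    ∀ y ∈ Set.Icc (S.q (j + 1)) (S.r j), S.T y = S.alpha j * (y - S.q (j + 1)) := by
  obtain ⟨m, c, h⟩ := S.haff1 j hj
  have h1 : m * S.q (j + 1) + c = 0 := by
    rw [← h (S.q (j + 1)) ⟨le_refl _, (S.hqr j hj).le⟩]; exact S.hTq (j + 1) (by omega)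
  have h2 : m * S.r j + c = S.p j := by
    rw [← h (S.r j) ⟨(S.hqr j hj).le, le_refl _⟩]; exact S.hTr j
  have hm : m = S.alpha j := by
    rw [alpha, eq_div_iff (ne_of_gt (S.rq_pos j hj))]
    ring_nf; ring_nf at h1 h2; linarith
  intro y hy
  rw [h y hy, hm]
  have : c = -(S.alpha j * S.q (j + 1)) := by rw [hm] at h1; linarith
  rw [this]; ring

/-- Explicit formula for `T` on the decreasing branch of tent `j`. -/
lemma Tdec (j : ℕ) (hj : 1 ≤ j) :
    ∀ y ∈ Set.Icc (S.r j) (S.q j), S.T y = S.beta j * (S.q j - y) := by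
  obtain ⟨m, c, h⟩ := S.haff2 j hj
  have h1 : m * S.r j + c = S.p j := by
    rw [← h (S.r j) ⟨le_refl _, (S.hrq j hj).le⟩]; exact S.hTr j
  have h2 : m * S.q j + c = 0 := by
    rw [← h (S.q j) ⟨(S.hrq j hj).le, le_refl _⟩]; exact S.hTq j hj
  have hm : m = -S.beta j := by
    rw [beta, neg_div', eq_div_iff (ne_of_gt (S.qr_pos j hj))]
    ring_nf; ring_nf at h1 h2; linarith
  intro y hy
  rw [h y hy, hm]
  have : c = S.beta j * S.q j := by rw [hm] at h2; linarith
  rw [this]; ring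


/-! ### Facts at level `kstar` -/

section Kstar

lemma q'_pos : 0 < S.q (S.kstar + 1) := S.hq_pos _ (by omega)

lemma q'_lt_e : S.q (S.kstar + 1) < S.e S.kstar := (S.he_mem _ S.hkstar).1

lemma e_lt_r : S.e S.kstar < S.r S.kstar := (S.he_mem _ S.hkstar).2

lemma e_pos : 0 < S.e S.kstar := lt_trans (S.q'_pos) (S.q'_lt_e)

lemma e_lt_p : S.e S.kstar < S.p S.kstar :=
  lt_trans S.e_lt_r (S.hpr _ S.hkstar)

lemma e_eq : S.e S.kstar = S.alpha S.kstar * (S.e S.kstar - S.q (S.kstar + 1)) := by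
  conv_lhs => rw [← S.he_fix _ S.hkstar]
  exact S.Tinc _ S.hkstar _ ⟨(S.q'_lt_e).le, (S.e_lt_r).le⟩

lemma one_div_alpha (j : ℕ) (hj : 1 ≤ j) :
    1 / S.alpha j = (S.r j - S.q (j + 1)) / S.p j := by
  rw [alpha, one_div_div]

lemma one_div_beta (j : ℕ) (hj : 1 ≤ j) :
    1 / S.beta j = (S.q j - S.r j) / S.p j := by
  rw [beta, one_div_div]

variable {S} in
/-- The key consequence of `hslope`: `p kstar ≤ q kstar - q (kstar + 1)`. -/
lemma p_le_qq (hslope : 1 ≤ 1 / S.alpha S.kstar + 1 / S.beta S.kstar) :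
    S.p S.kstar ≤ S.q S.kstar - S.q (S.kstar + 1) := by
  have h := hslope
  rw [S.one_div_alpha _ S.hkstar, S.one_div_beta _ S.hkstar, ← add_div,
    le_div_iff₀ (S.hp_pos _)] at h
  linarith

variable {S} in
lemma p_lt_q (hslope : 1 ≤ 1 / S.alpha S.kstar + 1 / S.beta S.kstar) :
    S.p S.kstar < S.q S.kstar :=
  lt_of_le_of_lt (p_le_qq hslope) (by linarith [S.q'_pos])

variable {S} in
/-- `e kstar ≤ T (p kstar)`; this is where `hslope` is used. -/
lemma Tp_ge_e (hslope : 1 ≤ 1 / S.alpha S.kstar + 1 / S.beta S.kstar) :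
    S.e S.kstar ≤ S.T (S.p S.kstar) := by
  set q' := S.q (S.kstar + 1)
  set qq := S.q S.kstar
  set rr := S.r S.kstar
  set pp := S.p S.kstar
  set ee := S.e S.kstar
  have hrp : rr < pp := S.hpr _ S.hkstar
  have hpq : pp < qq := p_lt_q hslope
  have hTp : S.T pp = S.beta S.kstar * (qq - pp) :=
    S.Tdec _ S.hkstar _ ⟨hrp.le, hpq.le⟩
  rw [hTp, beta, div_mul_eq_mul_div, le_div_iff₀ (S.qr_pos _ S.hkstar)]
  -- goal : ee * (qq - rr) ≤ pp * (qq - pp)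
  have key : ee * (rr - q') = pp * (ee - q') := by
    have h1 := S.e_eq
    have h2 := S.alpha_mul _ S.hkstar
    calc ee * (rr - q') = (S.alpha S.kstar * (ee - q')) * (rr - q') := by rw [← h1]
      _ = (S.alpha S.kstar * (rr - q')) * (ee - q') := by ring
      _ = pp * (ee - q') := by rw [h2]
  have h3 : q' ≤ qq - pp := by have := p_le_qq hslope; linarith
  have h4 : ee < pp := S.e_lt_p
  nlinarith [mul_nonneg (sub_nonneg.2 h4.le) (sub_nonneg.2 (by linarith : q' ≤ qq - pp))]

variable {S} in
/-- Invariance of `J kstar = [e kstar, p kstar]`. -/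
lemma Jk_inv (hslope : 1 ≤ 1 / S.alpha S.kstar + 1 / S.beta S.kstar) :
    ∀ y ∈ Set.Icc (S.e S.kstar) (S.p S.kstar),
    S.T y ∈ Set.Icc (S.e S.kstar) (S.p S.kstar) := by
  intro y hy
  have hαpos := S.alpha_pos _ S.hkstar
  have hβpos := S.beta_pos _ S.hkstar
  rcases le_total y (S.r S.kstar) with h | h
  · have hy' : y ∈ Set.Icc (S.q (S.kstar + 1)) (S.r S.kstar) :=
      ⟨le_trans (S.q'_lt_e).le hy.1, h⟩
    rw [S.Tinc _ S.hkstar y hy']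
    constructor
    · nlinarith [S.e_eq, hy.1]
    · nlinarith [S.alpha_mul _ S.hkstar]
  · have hy' : y ∈ Set.Icc (S.r S.kstar) (S.q S.kstar) :=
      ⟨h, le_trans hy.2 (p_lt_q hslope).le⟩
    rw [S.Tdec _ S.hkstar y hy']
    constructor
    · have hTp : S.T (S.p S.kstar) = S.beta S.kstar * (S.q S.kstar - S.p S.kstar) :=
        S.Tdec _ S.hkstar _ ⟨(S.hpr _ S.hkstar).le, (p_lt_q hslope).le⟩
      have := Tp_ge_e hslope
      rw [hTp] at this
      nlinarith [hy.2]
    · nlinarith [S.beta_mul _ S.hkstar, hy.2, S.rq_pos _ S.hkstar]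

/-- Bound for `T` on a full tent. -/
lemma tent_bound (j : ℕ) (hj : 1 ≤ j) :
    ∀ y ∈ Set.Icc (S.q (j + 1)) (S.q j), S.T y ∈ Set.Icc 0 (S.p j) := by
  intro y hy
  have hαpos := S.alpha_pos j hj
  have hβpos := S.beta_pos j hj
  rcases le_total y (S.r j) with h | h
  · rw [S.Tinc j hj y ⟨hy.1, h⟩]
    constructor
    · nlinarith [hy.1]
    · nlinarith [S.alpha_mul j hj, hy.1]
  · rw [S.Tdec j hj y ⟨h, hy.2⟩]
    constructor
    · nlinarith [hy.2]
    · nlinarith [S.beta_mul j hj, hy.2]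

/-- Localization: every point of `(0, q (kstar+1)]` lies in a tent `(q (j+1), q j]`. -/
lemma find_level (y : ℝ) : ∀ n j0, 1 ≤ j0 → y ≤ S.q j0 → S.q (j0 + n + 1) < y →
    ∃ j, j0 ≤ j ∧ S.q (j + 1) < y ∧ y ≤ S.q j := by
  intro n
  induction n with
  | zero =>
      intro j0 _ h1 h2
      exact ⟨j0, le_refl _, by simpa using h2, h1⟩
  | succ n ih =>
      intro j0 hj0 h1 h2
      by_cases h : S.q (j0 + 1) < y
      · exact ⟨j0, le_refl _, h, h1⟩
      · obtain ⟨j, hj, hh⟩ := ih (j0 + 1) (by omega) (not_lt.mp h)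
          (by have : j0 + 1 + n + 1 = j0 + (n + 1) + 1 := by omega
              rw [this]; exact h2)
        exact ⟨j, by omega, hh⟩

lemma locate (y : ℝ) (h0 : 0 < y) (h1 : y ≤ S.q (S.kstar + 1)) :
    ∃ j, S.kstar + 1 ≤ j ∧ S.q (j + 1) < y ∧ y ≤ S.q j := by
  obtain ⟨N, hN⟩ := Filter.eventually_atTop.mp (S.hq_lim.eventually_lt_const h0)
  exact S.find_level y N (S.kstar + 1) (by omega) h1 (hN _ (by omega))

variable {S} in
/-- Invariance of `J* = [0, p kstar]`. -/
lemma Jstar_inv (hslope : 1 ≤ 1 / S.alpha S.kstar + 1 / S.beta S.kstar) :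
    ∀ y ∈ S.Jstar, S.T y ∈ S.Jstar := by
  intro y hy
  rcases eq_or_lt_of_le hy.1 with h0 | h0
  · rw [← h0, S.hT0]; exact ⟨le_refl _, (S.hp_pos _).le⟩
  rcases le_or_gt y (S.q (S.kstar + 1)) with h | h
  · obtain ⟨j, hj, hj1, hj2⟩ := S.locate y h0 h
    have := S.tent_bound j (by omega) y ⟨hj1.le, hj2⟩
    exact ⟨this.1, le_trans this.2 ((S.p_strictAnti.antitone (by omega : S.kstar ≤ j)))⟩
  · have hyq : y ≤ S.q S.kstar := le_trans hy.2 (p_lt_q hslope).le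
    have := S.tent_bound S.kstar S.hkstar y ⟨h.le, hyq⟩
    exact ⟨this.1, this.2⟩

end Kstar

end SawMapSetup

/-! ### Images of intervals under affine branches -/

lemma aff_surj_inc {T : ℝ → ℝ} {m c u v a b : ℝ}
    (hval : ∀ y ∈ Set.Icc u v, T y = m * y + c) (hm : 0 < m)
    (hsub : Set.Icc a b ⊆ Set.Icc u v) (hab : a ≤ b) :
    Set.Icc (T a) (T b) ⊆ T '' Set.Icc a b := by
  intro z hz
  have ha := hval a (hsub ⟨le_refl a, hab⟩)
  have hb := hval b (hsub ⟨hab, le_refl b⟩)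
  have h1 : m * a + c ≤ z := ha ▸ hz.1
  have h2 : z ≤ m * b + c := hb ▸ hz.2
  have hy1 : a ≤ (z - c) / m := by rw [le_div_iff₀ hm]; linarith
  have hy2 : (z - c) / m ≤ b := by rw [div_le_iff₀ hm]; linarith
  refine ⟨(z - c) / m, ⟨hy1, hy2⟩, ?_⟩
  rw [hval _ (hsub ⟨hy1, hy2⟩)]
  field_simp
  ring

lemma aff_surj_dec {T : ℝ → ℝ} {m c u v a b : ℝ}
    (hval : ∀ y ∈ Set.Icc u v, T y = m * y + c) (hm : m < 0)
    (hsub : Set.Icc a b ⊆ Set.Icc u v) (hab : a ≤ b) :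
    Set.Icc (T b) (T a) ⊆ T '' Set.Icc a b := by
  intro z hz
  have ha := hval a (hsub ⟨le_refl a, hab⟩)
  have hb := hval b (hsub ⟨hab, le_refl b⟩)
  have h1 : m * b + c ≤ z := hb ▸ hz.1
  have h2 : z ≤ m * a + c := ha ▸ hz.2
  have hy1 : a ≤ (z - c) / m := by rw [le_div_iff_of_neg hm]; linarith
  have hy2 : (z - c) / m ≤ b := by rw [div_le_iff_of_neg hm]; linarith
  refine ⟨(z - c) / m, ⟨hy1, hy2⟩, ?_⟩
  rw [hval _ (hsub ⟨hy1, hy2⟩)]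
  field_simp [hm.ne]
  ring

namespace SawMapSetup

variable {S : SawMapSetup}

lemma image_succ (n : ℕ) (I₀ : Set ℝ) :
    S.T '' (S.T^[n] '' I₀) ⊆ S.T^[n + 1] '' I₀ := by
  rintro z ⟨w, ⟨y, hy, rfl⟩, rfl⟩
  exact ⟨y, hy, Function.iterate_succ_apply' S.T n y⟩

/-- If a point of some iterated image of an `Ω`-free subset of `J*` is mapped to `0` by `T`,
we get a contradiction. -/
lemma hit_omega {I₀ : Set ℝ} (hI₀J : I₀ ⊆ S.Jstar) (hfree : ∀ y ∈ I₀, y ∉ S.Omega)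
    {n : ℕ} {z : ℝ} (hz : z ∈ S.T^[n] '' I₀) (h0 : S.T z = 0) : False := by
  obtain ⟨y, hy, rfl⟩ := hz
  exact hfree y hy ⟨hI₀J hy, n + 1, by omega,
    by rw [Function.iterate_succ_apply']; exact h0⟩

/-- The endgame: once an iterated image of an `Ω`-free set contains an interval `[a, e kstar]`
with `a > q (kstar+1)`, repeated expansion below the fixed point `e kstar` forces the image to
eventually contain `q (kstar+1)`, a contradiction. -/
lemma endgame {I₀ : Set ℝ} (hI₀J : I₀ ⊆ S.Jstar) (hfree : ∀ y ∈ I₀, y ∉ S.Omega)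
    (n : ℕ) (a : ℝ) (ha1 : S.q (S.kstar + 1) < a) (ha2 : a < S.e S.kstar)
    (hsub : Set.Icc a (S.e S.kstar) ⊆ S.T^[n] '' I₀) : False := by
  set q' := S.q (S.kstar + 1) with hq'
  set ee := S.e S.kstar with hee
  set α := S.alpha S.kstar with hα
  have hα1 : 1 < α := S.alpha_gt_one _ S.hkstar
  have hα0 : 0 < α := by linarith
  have he_eq : ee = α * (ee - q') := S.e_eq
  have her : ee < S.r S.kstar := S.e_lt_r
  have hval : ∀ y ∈ Set.Icc q' (S.r S.kstar), S.T y = α * y + (-(α * q')) := by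
    intro y hy
    rw [S.Tinc _ S.hkstar y hy]; ring
  have key : ∀ m : ℕ, ∃ a', q' < a' ∧ a' < ee ∧
      Set.Icc a' ee ⊆ S.T^[n + m] '' I₀ ∧ (ee - a) * α ^ m ≤ ee - a' := by
    intro m
    induction m with
    | zero => exact ⟨a, ha1, ha2, hsub, by simp⟩
    | succ m ih =>
        obtain ⟨a', h1, h2, h3, h4⟩ := ih
        have hTa' : S.T a' = α * (a' - q') :=
          S.Tinc _ S.hkstar a' ⟨h1.le, by linarith⟩
        have hTee : S.T ee = ee := S.he_fix _ S.hkstar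
        have himg : Set.Icc (S.T a') ee ⊆ S.T^[n + m + 1] '' I₀ := by
          intro z hz
          apply image_succ (n + m) I₀
          refine Set.image_mono h3 ?_
          apply aff_surj_inc hval hα0 ?_ h2.le
          · rw [← hTee] at hz; exact hz
          · intro w hw
            exact ⟨le_trans h1.le hw.1, le_trans hw.2 her.le⟩
        have hlow : S.T a' < a' := by rw [hTa']; nlinarith
        by_cases hA : S.T a' ≤ q'
        · exact (hit_omega hI₀J hfree (himg ⟨hA, by linarith⟩)
            (S.hTq (S.kstar + 1) (by omega))).elim
        · push_neg at hA
          refine ⟨S.T a', hA, by linarith, by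
              have : n + (m + 1) = n + m + 1 := by omega
              rw [this]; exact himg, ?_⟩
          have hgap : ee - S.T a' = α * (ee - a') := by rw [hTa']; linarith [he_eq]
          rw [hgap, pow_succ]
          calc (ee - a) * (α ^ m * α) = ((ee - a) * α ^ m) * α := by ring
            _ ≤ (ee - a') * α := by nlinarith
            _ = α * (ee - a') := by ring
  obtain ⟨m, hm⟩ := pow_unbounded_of_one_lt ((ee - q') / (ee - a)) hα1
  obtain ⟨a', h1, _, _, h4⟩ := key m
  have : ee - q' < (ee - a) * α ^ m := by
    rw [div_lt_iff₀ (by linarith : (0:ℝ) < ee - a)] at hm; linarith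
  linarith

end SawMapSetup

namespace SawMapSetup

variable {S : SawMapSetup}

set_option maxHeartbeats 1000000 in
/-- Expansion phase: if the orbit of `x` stays in `[0, e kstar)` and a whole interval around
`x` misses `Ω`, we reach a contradiction. -/
lemma phase1 {x ε : ℝ} (hε : 0 < ε)
    (hsub : Set.Ioo (x - ε) (x + ε) ⊆ Set.Ioo 0 (S.e S.kstar))
    (hfree : ∀ y ∈ Set.Ioo (x - ε) (x + ε), y ∉ S.Omega)
    (horb : ∀ n, S.T^[n] x ∈ Set.Ico 0 (S.e S.kstar)) : False := by
  have hI₀J : Set.Ioo (x - ε) (x + ε) ⊆ S.Jstar := fun y hy =>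
    ⟨(hsub hy).1.le, le_trans (hsub hy).2.le S.e_lt_p.le⟩
  set K := S.kstar with hKdef
  have hK1 : 1 ≤ K := S.hkstar
  have hαK := S.alpha_pos K hK1
  have hαK1p : 0 < S.alpha (K + 1) := S.alpha_pos (K + 1) (by omega)
  have hβK1p : 0 < S.beta (K + 1) := S.beta_pos (K + 1) (by omega)
  set ι := 1 / S.alpha (K + 1) + 1 / S.beta (K + 1) with hιdef
  have hι_pos : 0 < ι := by positivity
  have he_lt_p1 : S.e K < S.p (K + 1) := by
    have := S.hp_e_big (K + 1) (le_refl _); simpa using this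
  have hι_lt : ι < 1 := by
    rw [hιdef, S.one_div_alpha (K + 1) (by omega), S.one_div_beta (K + 1) (by omega),
      ← add_div, div_lt_one (S.hp_pos _)]
    have h1 := S.hq_pos (K + 2) (by omega)
    have h2 := S.q'_lt_e
    linarith
  set L := min (S.alpha K) (1 / ι) with hLdef
  have hL1 : 1 < L := lt_min (S.alpha_gt_one _ hK1) (by rw [lt_div_iff₀ hι_pos]; linarith)
  have hL0 : 0 < L := by linarith
  have hιj : ∀ j, K + 1 ≤ j → 1 / S.alpha j + 1 / S.beta j ≤ ι := by
    intro j hj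
    have h1 : S.alpha (K + 1) ≤ S.alpha j := S.alpha_strictMono.monotone hj
    have h2 : S.beta (K + 1) ≤ S.beta j := S.beta_le (K + 1) j (by omega) hj
    rw [hιdef]
    gcongr
  have hLβ : ∀ j, K + 1 ≤ j → L ≤ S.beta j := by
    intro j hj
    have hβ := S.beta_pos j (by omega)
    have hα := S.alpha_pos j (by omega)
    have h1 : 1 / S.beta j ≤ ι := by
      have h01 : 0 < 1 / S.alpha j := by positivity
      linarith [hιj j hj]
    have h2 : 1 / ι ≤ S.beta j := by
      rw [div_le_iff₀ hι_pos]
      rw [div_le_iff₀ hβ] at h1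
      linarith [mul_comm ι (S.beta j)]
    exact le_trans (min_le_right _ _) h2
  have hLα : ∀ j, K ≤ j → L ≤ S.alpha j := fun j hj =>
    le_trans (min_le_left _ _) (S.alpha_strictMono.monotone hj)
  -- the expanding interval
  have main : ∀ m, ∃ a b : ℝ, 0 < a ∧ a ≤ S.T^[m] x ∧ S.T^[m] x ≤ b ∧ b < S.e K ∧
      Set.Icc a b ⊆ S.T^[m] '' Set.Ioo (x - ε) (x + ε) ∧ ε * L ^ m ≤ b - a := by
    intro m
    induction m with
    | zero =>
        have hmem : ∀ z, x - ε / 2 ≤ z → z ≤ x + ε / 2 → z ∈ Set.Ioo (x - ε) (x + ε) :=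
          fun z h1 h2 => ⟨by linarith, by linarith⟩
        refine ⟨x - ε / 2, x + ε / 2, (hsub (hmem _ (le_refl _) (by linarith))).1,
          by linarith [Function.iterate_zero_apply S.T x], by linarith [Function.iterate_zero_apply S.T x],
          (hsub (hmem _ (by linarith) (le_refl _))).2, ?_, by rw [pow_zero, mul_one]; linarith⟩
        intro z hz
        rw [Function.iterate_zero, Set.image_id]
        exact hmem z hz.1 hz.2
    | succ m ih =>
        obtain ⟨a, b, ha0, hax, hxb, hbe, hicc, hlen⟩ := ih
        have hab : a ≤ b := le_trans hax hxb
        have hy1 : S.T^[m + 1] x = S.T (S.T^[m] x) := Function.iterate_succ_apply' S.T m x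
        have hy_lt : S.T^[m + 1] x < S.e K := (horb (m + 1)).2
        have himg1 : S.T '' Set.Icc a b ⊆ S.T^[m + 1] '' Set.Ioo (x - ε) (x + ε) :=
          le_trans (Set.image_mono hicc) (image_succ m _)
        -- common epilogue
        have epi : ∀ a' b' : ℝ, 0 ≤ a' →
            Set.Icc a' b' ⊆ S.T^[m + 1] '' Set.Ioo (x - ε) (x + ε) →
            a' ≤ S.T^[m + 1] x → S.T^[m + 1] x ≤ b' → L * (b - a) ≤ b' - a' →
            ∃ a b : ℝ, 0 < a ∧ a ≤ S.T^[m + 1] x ∧ S.T^[m + 1] x ≤ b ∧ b < S.e K ∧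
              Set.Icc a b ⊆ S.T^[m + 1] '' Set.Ioo (x - ε) (x + ε) ∧ ε * L ^ (m + 1) ≤ b - a := by
          intro a' b' h0 hs hm1 hm2 hl
          have hab' : a' ≤ b' := le_trans hm1 hm2
          by_cases hb' : b' < S.e K
          · rcases eq_or_lt_of_le h0 with h0' | h0'
            · exact (hit_omega hI₀J hfree (hs ⟨h0'.symm.le, h0'.le.trans hab'⟩) S.hT0).elim
            · refine ⟨a', b', h0', hm1, hm2, hb', hs, ?_⟩
              have := mul_le_mul_of_nonneg_left hlen hL0.le
              calc ε * L ^ (m + 1) = L * (ε * L ^ m) := by ring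
                _ ≤ L * (b - a) := this
                _ ≤ b' - a' := hl
          · push_neg at hb'
            by_cases ha' : a' ≤ S.q (K + 1)
            · exact (hit_omega hI₀J hfree
                (hs ⟨ha', le_trans (le_of_lt S.q'_lt_e) hb'⟩)
                (S.hTq (K + 1) (by omega))).elim
            · push_neg at ha'
              exact (endgame hI₀J hfree (m + 1) a' ha' (lt_of_le_of_lt hm1 hy_lt)
                ((Set.Icc_subset_Icc_right hb').trans hs)).elim
        by_cases hqa : S.q (K + 1) < a
        · -- inside the increasing branch of tent `K`
          have hbr : b ≤ S.r K := le_trans hbe.le S.e_lt_r.le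
          have hpiece : Set.Icc a b ⊆ Set.Icc (S.q (K + 1)) (S.r K) :=
            fun z hz => ⟨le_trans hqa.le hz.1, le_trans hz.2 hbr⟩
          have hval : ∀ w ∈ Set.Icc (S.q (K + 1)) (S.r K),
              S.T w = S.alpha K * w + (-(S.alpha K * S.q (K + 1))) :=
            fun w hw => by rw [S.Tinc K hK1 w hw]; ring
          have hTa : S.T a = S.alpha K * (a - S.q (K + 1)) :=
            S.Tinc K hK1 a (hpiece ⟨le_refl _, hab⟩)
          have hTb : S.T b = S.alpha K * (b - S.q (K + 1)) :=
            S.Tinc K hK1 b (hpiece ⟨hab, le_refl _⟩)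
          have hTy : S.T (S.T^[m] x) = S.alpha K * (S.T^[m] x - S.q (K + 1)) :=
            S.Tinc K hK1 _ (hpiece ⟨hax, hxb⟩)
          apply epi (S.T a) (S.T b)
          · rw [hTa]; exact mul_nonneg hαK.le (by linarith)
          · exact (aff_surj_inc hval hαK hpiece hab).trans himg1
          · rw [hy1, hTy, hTa]; exact mul_le_mul_of_nonneg_left (by linarith) hαK.le
          · rw [hy1, hTy, hTb]; exact mul_le_mul_of_nonneg_left (by linarith) hαK.le
          · have hd : S.T b - S.T a = S.alpha K * (b - a) := by rw [hTa, hTb]; ring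
            have := mul_le_mul_of_nonneg_right (hLα K (le_refl K)) (sub_nonneg.2 hab)
            linarith
        · push_neg at hqa
          by_cases hqb : S.q (K + 1) ≤ b
          · exact (hit_omega hI₀J hfree (hicc ⟨hqa, hqb⟩) (S.hTq (K + 1) (by omega))).elim
          · push_neg at hqb
            obtain ⟨j, hjK, hja, hjb⟩ := S.locate a ha0 hqa
            by_cases hqjb : S.q j ≤ b
            · exact (hit_omega hI₀J hfree (hicc ⟨hjb, hqjb⟩) (S.hTq j (by omega))).elim
            · push_neg at hqjb
              have hj1 : 1 ≤ j := by omega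
              have hαj := S.alpha_pos j hj1
              have hβj := S.beta_pos j hj1
              have hvalI : ∀ w ∈ Set.Icc (S.q (j + 1)) (S.r j),
                  S.T w = S.alpha j * w + (-(S.alpha j * S.q (j + 1))) :=
                fun w hw => by rw [S.Tinc j hj1 w hw]; ring
              have hvalD : ∀ w ∈ Set.Icc (S.r j) (S.q j),
                  S.T w = (-(S.beta j)) * w + S.beta j * S.q j :=
                fun w hw => by rw [S.Tdec j hj1 w hw]; ring
              rcases le_or_gt b (S.r j) with hbr | hbr
              · -- increasing branch of tent `j`
                have hpiece : Set.Icc a b ⊆ Set.Icc (S.q (j + 1)) (S.r j) :=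
                  fun z hz => ⟨le_trans hja.le hz.1, le_trans hz.2 hbr⟩
                have hTa : S.T a = S.alpha j * (a - S.q (j + 1)) :=
                  S.Tinc j hj1 a (hpiece ⟨le_refl _, hab⟩)
                have hTb : S.T b = S.alpha j * (b - S.q (j + 1)) :=
                  S.Tinc j hj1 b (hpiece ⟨hab, le_refl _⟩)
                have hTy : S.T (S.T^[m] x) = S.alpha j * (S.T^[m] x - S.q (j + 1)) :=
                  S.Tinc j hj1 _ (hpiece ⟨hax, hxb⟩)
                apply epi (S.T a) (S.T b)
                · rw [hTa]; exact mul_nonneg hαj.le (by linarith)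
                · exact (aff_surj_inc hvalI hαj hpiece hab).trans himg1
                · rw [hy1, hTy, hTa]; exact mul_le_mul_of_nonneg_left (by linarith) hαj.le
                · rw [hy1, hTy, hTb]; exact mul_le_mul_of_nonneg_left (by linarith) hαj.le
                · have hd : S.T b - S.T a = S.alpha j * (b - a) := by rw [hTa, hTb]; ring
                  have := mul_le_mul_of_nonneg_right (hLα j (by omega)) (sub_nonneg.2 hab)
                  linarith
              · rcases le_or_gt (S.r j) a with har | har
                · -- decreasing branch of tent `j`
                  have hpiece : Set.Icc a b ⊆ Set.Icc (S.r j) (S.q j) :=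
                    fun z hz => ⟨le_trans har hz.1, le_trans hz.2 hqjb.le⟩
                  have hTa : S.T a = S.beta j * (S.q j - a) :=
                    S.Tdec j hj1 a (hpiece ⟨le_refl _, hab⟩)
                  have hTb : S.T b = S.beta j * (S.q j - b) :=
                    S.Tdec j hj1 b (hpiece ⟨hab, le_refl _⟩)
                  have hTy : S.T (S.T^[m] x) = S.beta j * (S.q j - S.T^[m] x) :=
                    S.Tdec j hj1 _ (hpiece ⟨hax, hxb⟩)
                  apply epi (S.T b) (S.T a)
                  · rw [hTb]; exact mul_nonneg hβj.le (by linarith)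
                  · exact (aff_surj_dec hvalD (by linarith : -(S.beta j) < 0) hpiece hab).trans himg1
                  · rw [hy1, hTy, hTb]; exact mul_le_mul_of_nonneg_left (by linarith) hβj.le
                  · rw [hy1, hTy, hTa]; exact mul_le_mul_of_nonneg_left (by linarith) hβj.le
                  · have hd : S.T a - S.T b = S.beta j * (b - a) := by rw [hTa, hTb]; ring
                    have := mul_le_mul_of_nonneg_right (hLβ j (by omega)) (sub_nonneg.2 hab)
                    linarith
                · -- straddling the peak `r j`
                  have hpL : Set.Icc a (S.r j) ⊆ Set.Icc (S.q (j + 1)) (S.r j) :=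
                    fun z hz => ⟨le_trans hja.le hz.1, hz.2⟩
                  have hpR : Set.Icc (S.r j) b ⊆ Set.Icc (S.r j) (S.q j) :=
                    fun z hz => ⟨hz.1, le_trans hz.2 hqjb.le⟩
                  have hTa : S.T a = S.alpha j * (a - S.q (j + 1)) :=
                    S.Tinc j hj1 a (hpL ⟨le_refl _, har.le⟩)
                  have hTb : S.T b = S.beta j * (S.q j - b) :=
                    S.Tdec j hj1 b (hpR ⟨hbr.le, le_refl _⟩)
                  have hTr : S.T (S.r j) = S.p j := S.hTr j
                  have hpj1 : S.alpha j * (S.r j - S.q (j + 1)) = S.p j := S.alpha_mul j hj1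
                  have hpj2 : S.beta j * (S.q j - S.r j) = S.p j := S.beta_mul j hj1
                  have hA0 : 0 ≤ S.T a := by
                    rw [hTa]; exact mul_nonneg hαj.le (by linarith)
                  have hB0 : 0 ≤ S.T b := by
                    rw [hTb]; exact mul_nonneg hβj.le (by linarith)
                  have himage : Set.Icc (min (S.T a) (S.T b)) (S.p j) ⊆
                      S.T^[m + 1] '' Set.Ioo (x - ε) (x + ε) := by
                    intro z hz
                    rcases min_le_iff.mp hz.1 with h | h
                    · have hz' : z ∈ Set.Icc (S.T a) (S.T (S.r j)) := ⟨h, by rw [hTr]; exact hz.2⟩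
                      have := aff_surj_inc hvalI hαj hpL har.le hz'
                      exact himg1 (Set.image_mono (Set.Icc_subset_Icc_right hbr.le) this)
                    · have hz' : z ∈ Set.Icc (S.T b) (S.T (S.r j)) := ⟨h, by rw [hTr]; exact hz.2⟩
                      have := aff_surj_dec hvalD (by linarith : -(S.beta j) < 0) hpR hbr.le hz'
                      exact himg1 (Set.image_mono (Set.Icc_subset_Icc_left har.le) this)
                  have hylow : min (S.T a) (S.T b) ≤ S.T^[m + 1] x := by
                    rw [hy1]
                    rcases le_total (S.T^[m] x) (S.r j) with hyr | hyr
                    · have hTy : S.T (S.T^[m] x) = S.alpha j * (S.T^[m] x - S.q (j + 1)) :=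
                        S.Tinc j hj1 _ (hpL ⟨hax, hyr⟩)
                      refine le_trans (min_le_left _ _) ?_
                      rw [hTy, hTa]; exact mul_le_mul_of_nonneg_left (by linarith) hαj.le
                    · have hTy : S.T (S.T^[m] x) = S.beta j * (S.q j - S.T^[m] x) :=
                        S.Tdec j hj1 _ (hpR ⟨hyr, hxb⟩)
                      refine le_trans (min_le_right _ _) ?_
                      rw [hTy, hTb]; exact mul_le_mul_of_nonneg_left (by linarith) hβj.le
                  have hyhigh : S.T^[m + 1] x ≤ S.p j := by
                    rw [hy1]
                    rcases le_total (S.T^[m] x) (S.r j) with hyr | hyr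
                    · have hTy : S.T (S.T^[m] x) = S.alpha j * (S.T^[m] x - S.q (j + 1)) :=
                        S.Tinc j hj1 _ (hpL ⟨hax, hyr⟩)
                      rw [hTy]
                      exact le_trans (mul_le_mul_of_nonneg_left (by linarith) hαj.le)
                        (le_of_eq hpj1)
                    · have hTy : S.T (S.T^[m] x) = S.beta j * (S.q j - S.T^[m] x) :=
                        S.Tdec j hj1 _ (hpR ⟨hyr, hxb⟩)
                      rw [hTy]
                      exact le_trans (mul_le_mul_of_nonneg_left (by linarith) hβj.le)
                        (le_of_eq hpj2)
                  have hlen' : L * (b - a) ≤ S.p j - min (S.T a) (S.T b) := by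
                    have e1 : S.alpha j * (S.r j - a) = S.p j - S.T a := by rw [hTa]; linarith
                    have e2 : S.beta j * (b - S.r j) = S.p j - S.T b := by rw [hTb]; linarith
                    have hmin1 : S.p j - S.T a ≤ S.p j - min (S.T a) (S.T b) := by
                      have := min_le_left (S.T a) (S.T b); linarith
                    have hmin2 : S.p j - S.T b ≤ S.p j - min (S.T a) (S.T b) := by
                      have := min_le_right (S.T a) (S.T b); linarith
                    have hM0 : 0 ≤ S.p j - min (S.T a) (S.T b) := by
                      have : 0 ≤ S.alpha j * (S.r j - a) := mul_nonneg hαj.le (by linarith)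
                      linarith
                    have key : b - a ≤ (S.p j - min (S.T a) (S.T b)) * ι := by
                      have f1 : S.r j - a = (S.p j - S.T a) / S.alpha j := by
                        rw [eq_div_iff hαj.ne']; linear_combination e1
                      have f2 : b - S.r j = (S.p j - S.T b) / S.beta j := by
                        rw [eq_div_iff hβj.ne']; linear_combination e2
                      have g1 : (S.p j - S.T a) / S.alpha j ≤
                          (S.p j - min (S.T a) (S.T b)) * (1 / S.alpha j) := by
                        rw [mul_one_div]; gcongr
                      have g2 : (S.p j - S.T b) / S.beta j ≤
                          (S.p j - min (S.T a) (S.T b)) * (1 / S.beta j) := by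
                        rw [mul_one_div]; gcongr
                      have g3 : (S.p j - min (S.T a) (S.T b)) * (1 / S.alpha j) +
                          (S.p j - min (S.T a) (S.T b)) * (1 / S.beta j) ≤
                          (S.p j - min (S.T a) (S.T b)) * ι := by
                        calc (S.p j - min (S.T a) (S.T b)) * (1 / S.alpha j) +
                            (S.p j - min (S.T a) (S.T b)) * (1 / S.beta j)
                            = (S.p j - min (S.T a) (S.T b)) * (1 / S.alpha j + 1 / S.beta j) := by
                              ring
                          _ ≤ (S.p j - min (S.T a) (S.T b)) * ι :=
                              mul_le_mul_of_nonneg_left (hιj j (by omega)) hM0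
                      calc b - a = (S.r j - a) + (b - S.r j) := by ring
                        _ = (S.p j - S.T a) / S.alpha j + (S.p j - S.T b) / S.beta j := by
                            rw [← f1, ← f2]
                        _ ≤ (S.p j - min (S.T a) (S.T b)) * (1 / S.alpha j) +
                            (S.p j - min (S.T a) (S.T b)) * (1 / S.beta j) := add_le_add g1 g2
                        _ ≤ (S.p j - min (S.T a) (S.T b)) * ι := g3
                    have hL2 : L * (b - a) ≤ (1 / ι) * (b - a) :=
                      mul_le_mul_of_nonneg_right (min_le_right _ _) (sub_nonneg.2 hab)
                    have : (1 / ι) * (b - a) ≤ (1 / ι) * ((S.p j - min (S.T a) (S.T b)) * ι) := by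
                      have h1ι : 0 < 1 / ι := by positivity
                      exact mul_le_mul_of_nonneg_left key h1ι.le
                    have heq : (1 / ι) * ((S.p j - min (S.T a) (S.T b)) * ι) =
                        S.p j - min (S.T a) (S.T b) := by
                      field_simp
                    linarith
                  exact epi (min (S.T a) (S.T b)) (S.p j) (le_min hA0 hB0) himage hylow hyhigh hlen'
  -- conclude: the interval length is bounded by `e K`, contradiction with growth
  obtain ⟨m, hm⟩ := pow_unbounded_of_one_lt (S.e K / ε) hL1
  obtain ⟨a, b, ha0, _, _, hbe, _, hlen⟩ := main m
  rw [div_lt_iff₀ hε] at hm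
  have : S.e K < ε * L ^ m := by linarith [mul_comm ε (L ^ m)]
  linarith

end SawMapSetup

/-- Under the saw map setup, if `1/α kstar + 1/β kstar ≥ 1`, then every point of `J* \ Σ`
eventually stays in the segment `J kstar = [e kstar, p kstar]`. -/
theorem eventually_in_Jkstar (S : SawMapSetup)
    (hslope : 1 ≤ 1 / S.alpha S.kstar + 1 / S.beta S.kstar) :
    ∀ x ∈ S.Jstar, x ∉ S.Sig →
      ∃ n : ℕ, ∀ i, n ≤ i → S.T^[i] x ∈ S.Jk S.kstar := by
  intro x hx hxS
  by_cases hn : ∃ n, S.T^[n] x ∈ S.Jk S.kstar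
  · obtain ⟨n, hn⟩ := hn
    refine ⟨n, fun i hi => ?_⟩
    induction i, hi using Nat.le_induction with
    | base => exact hn
    | succ i hi ih =>
        rw [Function.iterate_succ_apply']
        exact SawMapSetup.Jk_inv hslope _ ih
  · push_neg at hn
    exfalso
    have horbJ : ∀ m, S.T^[m] x ∈ S.Jstar := by
      intro m
      induction m with
      | zero => simpa using hx
      | succ m ih =>
          rw [Function.iterate_succ_apply']
          exact SawMapSetup.Jstar_inv hslope _ ih
    have horb : ∀ m, S.T^[m] x ∈ Set.Ico 0 (S.e S.kstar) := by
      intro m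
      refine ⟨(horbJ m).1, ?_⟩
      by_contra h
      push_neg at h
      exact hn m ⟨h, (horbJ m).2⟩
    have hzero_mem : (0 : ℝ) ∈ S.Omega :=
      ⟨⟨le_refl _, (S.hp_pos _).le⟩, 1, le_refl _, by simp [S.hT0]⟩
    have hx0 : 0 < x := by
      rcases eq_or_lt_of_le hx.1 with h | h
      · exact absurd (subset_closure (h ▸ hzero_mem)) hxS
      · exact h
    have hxe : x < S.e S.kstar := by simpa using (horb 0).2
    rw [SawMapSetup.Sig, Metric.mem_closure_iff] at hxS
    push_neg at hxS
    obtain ⟨ε, hε, hdisj⟩ := hxS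
    set ε₂ := min ε (min x (S.e S.kstar - x)) with hε₂def
    have hε₂ : 0 < ε₂ := lt_min hε (lt_min hx0 (by linarith))
    apply SawMapSetup.phase1 hε₂ ?_ ?_ horb
    · intro y hy
      have h1 : ε₂ ≤ x := le_trans (min_le_right _ _) (min_le_left _ _)
      have h2 : ε₂ ≤ S.e S.kstar - x := le_trans (min_le_right _ _) (min_le_right _ _)
      exact ⟨by linarith [hy.1], by linarith [hy.2]⟩
    · intro y hy hyΩ
      have h1 : ε₂ ≤ ε := min_le_left _ _
      have : dist x y < ε := by
        rw [Real.dist_eq, abs_lt]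
        constructor <;> [linarith [hy.2]; linarith [hy.1]]
      exact absurd (hdisj y hyΩ) (by simpa using this)
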